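/- For all nonnegative integers a and b, the quantity Λ₁(a,b) := 2 · ∑_{j=1}^{b} H_{j+a} · (b − 1 + κ_{j−1} + κ_{b−j} − κ_b) is nonpositive: Λ₁(a,b) ≤ 0. -/
import Mathlib


open Finset Filter Topology

/-- The `n`-th harmonic number `H_n = ∑_{i=1}^n 1/i`. -/
noncomputable def H (n : ℕ) : ℝ := ∑ i ∈ Finset.range n, (1 : ℝ) / (i + 1)

/-- `κ_n = 2(n+1)H_n - 4n`, the mean number of key comparisons for QuickSort on `n` keys. -/
noncomputable def κ (n : ℕ) : ℝ := 2 * (n + 1) * H n - 4 * n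

lemma H_succ' (n : ℕ) : H (n+1) = H n + 1/(n+1) := by
  simp [H, Finset.sum_range_succ]

lemma H_mono' : Monotone H := by
  intro m n h
  apply Finset.sum_le_sum_of_subset_of_nonneg (Finset.range_subset_range.2 h)
  intro i _ _
  positivity

lemma kappa_succ' (n : ℕ) : κ (n+1) = κ n + 2 * H (n+1) - 2 := by
  have hn : (n:ℝ) + 1 ≠ 0 := by positivity
  simp only [κ, H_succ']
  push_cast
  field_simp
  ring

lemma kappa_rec' (b : ℕ) : (b:ℝ) * κ b = b*(b-1) + 2*∑ j ∈ Finset.range b, κ j := by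
  induction b with
  | zero => simp [κ]
  | succ b ih =>
    rw [Finset.sum_range_succ, kappa_succ']
    have : 2 * ((b:ℝ)+1) * H (b+1) = κ b + 4*b + 2 := by
      simp only [κ, H_succ']
      have hn : (b:ℝ) + 1 ≠ 0 := by positivity
      field_simp
      ring
    push_cast
    nlinarith [this]

/-- The weight `c_j = b - 1 + κ_{j-1} + κ_{b-j} - κ_b`. -/
noncomputable def cc (b j : ℕ) : ℝ := (b:ℝ) - 1 + κ (j-1) + κ (b-j) - κ b

/-- The symmetrized harmonic weight. -/
noncomputable def gg (a b j : ℕ) : ℝ := (H (j+a) + H (b+1-j+a))/2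

lemma cc_refl' (b j : ℕ) (h1 : 1 ≤ j) (h2 : j ≤ b) : cc b (b+1-j) = cc b j := by
  unfold cc
  have e1 : b+1-j-1 = b-j := by omega
  have e2 : b-(b+1-j) = j-1 := by omega
  rw [e1, e2]; ring

lemma gg_refl' (a b j : ℕ) (h1 : 1 ≤ j) (h2 : j ≤ b) : gg a b (b+1-j) = gg a b j := by
  unfold gg
  have e2 : b+1-(b+1-j) = j := by omega
  rw [e2]; ring

lemma cc_step' (b k : ℕ) (h1 : 1 ≤ k) (h2 : 2*k ≤ b) : cc b (k+1) ≤ cc b k := by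
  unfold cc
  have e1 : k+1-1 = (k-1)+1 := by omega
  have e2 : b-k = (b-(k+1))+1 := by omega
  rw [e1, e2, kappa_succ', kappa_succ']
  have e3 : (k-1)+1 = k := by omega
  have e4 : (b-(k+1))+1 = b-k := by omega
  rw [e3, e4]
  have : H k ≤ H (b-k) := H_mono' (by omega)
  linarith

lemma gg_step' (a b k : ℕ) (h1 : 1 ≤ k) (h2 : 2*k ≤ b) : gg a b k ≤ gg a b (k+1) := by
  unfold gg
  have e1 : k+1+a = (k+a)+1 := by omega
  have e2 : b+1-k+a = ((b-k+a))+1 := by omega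
  rw [e1, e2, H_succ', H_succ']
  have e3 : b+1-(k+1)+a = b-k+a := by omega
  rw [e3]
  have hle : (1:ℝ)/(↑(b-k+a)+1) ≤ 1/(↑(k+a)+1) := by
    apply one_div_le_one_div_of_le
    · positivity
    · have : k+a ≤ b-k+a := by omega
      push_cast [this]
      exact_mod_cast by exact_mod_cast Nat.cast_le.2 (by omega : k+a+1 ≤ b-k+a+1)
  push_cast at hle ⊢
  linarith

lemma ccgg_mono' (a b : ℕ) : ∀ l k, 1 ≤ k → k ≤ l → 2*l ≤ b+1 →
    cc b l ≤ cc b k ∧ gg a b k ≤ gg a b l := by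
  intro l
  induction l with
  | zero => intro k h1 h2 _; omega
  | succ l ih =>
    intro k h1 h2 h3
    rcases Nat.eq_or_lt_of_le h2 with rfl | hlt
    · exact ⟨le_refl _, le_refl _⟩
    have hkl : k ≤ l := by omega
    have h1l : 1 ≤ l := le_trans h1 hkl
    have hb : 2*l ≤ b := by omega
    obtain ⟨hc, hg⟩ := ih k h1 hkl (by omega)
    exact ⟨le_trans (cc_step' b l h1l hb) hc, le_trans hg (gg_step' a b l h1l hb)⟩

lemma pair' (a b i j : ℕ) (hi : i ∈ Finset.Icc 1 b) (hj : j ∈ Finset.Icc 1 b) :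
    (cc b i - cc b j) * (gg a b i - gg a b j) ≤ 0 := by
  simp only [Finset.mem_Icc] at hi hj
  set i' := min i (b+1-i) with hi'
  set j' := min j (b+1-j) with hj'
  have hci : cc b i = cc b i' := by
    rcases le_total i (b+1-i) with h | h
    · rw [hi', min_eq_left h]
    · rw [hi', min_eq_right h]
      exact (cc_refl' b i hi.1 hi.2).symm
  have hgi : gg a b i = gg a b i' := by
    rcases le_total i (b+1-i) with h | h
    · rw [hi', min_eq_left h]
    · rw [hi', min_eq_right h]
      exact (gg_refl' a b i hi.1 hi.2).symm
  have hcj : cc b j = cc b j' := by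
    rcases le_total j (b+1-j) with h | h
    · rw [hj', min_eq_left h]
    · rw [hj', min_eq_right h]
      exact (cc_refl' b j hj.1 hj.2).symm
  have hgj : gg a b j = gg a b j' := by
    rcases le_total j (b+1-j) with h | h
    · rw [hj', min_eq_left h]
    · rw [hj', min_eq_right h]
      exact (gg_refl' a b j hj.1 hj.2).symm
  have h1i : 1 ≤ i' := by omega
  have h1j : 1 ≤ j' := by omega
  have h2i : 2*i' ≤ b+1 := by omega
  have h2j : 2*j' ≤ b+1 := by omega
  rw [hci, hgi, hcj, hgj]
  rcases le_total i' j' with h | h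
  · obtain ⟨hc, hg⟩ := ccgg_mono' a b j' i' h1i h h2j
    exact mul_nonpos_of_nonneg_of_nonpos (by linarith) (by linarith)
  · obtain ⟨hc, hg⟩ := ccgg_mono' a b i' j' h1j h h2i
    exact mul_nonpos_of_nonpos_of_nonneg (by linarith) (by linarith)

/-- Chebyshev-type inequality: anti-monotonically coupled weights with zero sum. -/
lemma cheb' (s : Finset ℕ) (c g : ℕ → ℝ) (h0 : ∑ j ∈ s, c j = 0)
    (h : ∀ i ∈ s, ∀ j ∈ s, (c i - c j) * (g i - g j) ≤ 0) :
    ∑ j ∈ s, g j * c j ≤ 0 := by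
  rcases Finset.eq_empty_or_nonempty s with rfl | hs
  · simp
  have hcard : (0:ℝ) < s.card := by exact_mod_cast Finset.card_pos.2 hs
  have hcg : ∑ j ∈ s, c j * g j = ∑ j ∈ s, g j * c j :=
    Finset.sum_congr rfl fun j _ => mul_comm _ _
  have inner : ∀ i ∈ s, ∑ j ∈ s, (c i - c j) * (g i - g j)
      = s.card * (c i * g i) - c i * (∑ j ∈ s, g j) + ∑ j ∈ s, g j * c j := by
    intro i _
    calc ∑ j ∈ s, (c i - c j) * (g i - g j)
        = ∑ j ∈ s, (c i * g i - c i * g j - g i * c j + c j * g j) :=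
          Finset.sum_congr rfl fun j _ => by ring
      _ = _ := by
          rw [Finset.sum_add_distrib, Finset.sum_sub_distrib, Finset.sum_sub_distrib,
            Finset.sum_const, nsmul_eq_mul, ← Finset.mul_sum, ← Finset.mul_sum, h0, hcg]
          ring
  have expand : ∑ i ∈ s, ∑ j ∈ s, (c i - c j) * (g i - g j)
      = 2 * s.card * ∑ j ∈ s, g j * c j := by
    rw [Finset.sum_congr rfl inner, Finset.sum_add_distrib, Finset.sum_sub_distrib,
      Finset.sum_const, nsmul_eq_mul, ← Finset.sum_mul, ← Finset.mul_sum]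
    have h2 : ∑ i ∈ s, c i * g i = ∑ j ∈ s, g j * c j :=
      Finset.sum_congr rfl fun j _ => mul_comm _ _
    rw [h2, h0]
    ring
  have hneg : ∑ i ∈ s, ∑ j ∈ s, (c i - c j) * (g i - g j) ≤ 0 :=
    Finset.sum_nonpos fun i hi => Finset.sum_nonpos fun j hj => h i hi j hj
  rw [expand] at hneg
  nlinarith

lemma sum_Icc_reflect' (b : ℕ) (f : ℕ → ℝ) :
    ∑ j ∈ Finset.Icc 1 b, f (b+1-j) = ∑ j ∈ Finset.Icc 1 b, f j := by
  apply Finset.sum_nbij' (fun j => b+1-j) (fun j => b+1-j)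
  · intro a ha; simp only [Finset.mem_Icc] at *; omega
  · intro a ha; simp only [Finset.mem_Icc] at *; omega
  · intro a ha; simp only [Finset.mem_Icc] at *; omega
  · intro a ha; simp only [Finset.mem_Icc] at *; omega
  · intro a ha; rfl

lemma sum_Icc_range' (b : ℕ) (f : ℕ → ℝ) :
    ∑ j ∈ Finset.Icc 1 b, f j = ∑ i ∈ Finset.range b, f (i+1) := by
  apply Finset.sum_nbij' (fun j => j - 1) (fun i => i + 1)
  · intro a ha; simp only [Finset.mem_Icc, Finset.mem_range] at *; omega
  · intro a ha; simp only [Finset.mem_Icc, Finset.mem_range] at *; omega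
  · intro a ha; simp only [Finset.mem_Icc] at ha; omega
  · intro a ha; omega
  · intro a ha; simp only [Finset.mem_Icc] at ha; congr 1; omega

lemma sum_cc' (b : ℕ) : ∑ j ∈ Finset.Icc 1 b, cc b j = 0 := by
  have hsplit : ∑ j ∈ Finset.Icc 1 b, cc b j
      = (∑ _j ∈ Finset.Icc 1 b, ((b:ℝ)-1-κ b)) + (∑ j ∈ Finset.Icc 1 b, κ (j-1))
        + (∑ j ∈ Finset.Icc 1 b, κ (b-j)) := by
    rw [← Finset.sum_add_distrib, ← Finset.sum_add_distrib]
    exact Finset.sum_congr rfl fun j _ => by unfold cc; ring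
  have h1 : ∑ j ∈ Finset.Icc 1 b, κ (j-1) = ∑ i ∈ Finset.range b, κ i := by
    rw [sum_Icc_range']; simp
  have h2 : ∑ j ∈ Finset.Icc 1 b, κ (b-j) = ∑ j ∈ Finset.Icc 1 b, κ (j-1) := by
    rw [← sum_Icc_reflect' b (fun j => κ (j-1))]
    exact Finset.sum_congr rfl fun j _ => by congr 1; omega
  rw [hsplit, h2, h1, Finset.sum_const, Nat.card_Icc, nsmul_eq_mul]
  have := kappa_rec' b
  have hb : ((b+1-1 : ℕ) : ℝ) = (b:ℝ) := by push_cast [Nat.add_sub_cancel]; ring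
  rw [hb]
  linarith

theorem lambda1_nonpos (a b : ℕ) :
    2 * ∑ j ∈ Finset.Icc 1 b,
      H (j + a) * ((b : ℝ) - 1 + κ (j - 1) + κ (b - j) - κ b) ≤ 0 := by
  have key : ∑ j ∈ Finset.Icc 1 b, gg a b j * cc b j ≤ 0 :=
    cheb' _ _ _ (sum_cc' b) (fun i hi j hj => pair' a b i j hi hj)
  have hrefl : ∑ j ∈ Finset.Icc 1 b, H (b+1-j+a) * cc b j
      = ∑ j ∈ Finset.Icc 1 b, H (j+a) * cc b j := by
    rw [← sum_Icc_reflect' b (fun j => H (j+a) * cc b j)]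
    refine Finset.sum_congr rfl fun j hj => ?_
    simp only [Finset.mem_Icc] at hj
    rw [cc_refl' b j hj.1 hj.2]
  have hgg : ∑ j ∈ Finset.Icc 1 b, gg a b j * cc b j
      = ∑ j ∈ Finset.Icc 1 b, H (j+a) * cc b j := by
    have step : ∀ j ∈ Finset.Icc 1 b, gg a b j * cc b j
        = (H (j+a) * cc b j + H (b+1-j+a) * cc b j) / 2 := by
      intro j _; unfold gg; ring
    rw [Finset.sum_congr rfl step, ← Finset.sum_div, Finset.sum_add_distrib, hrefl]
    ring
  have hle : ∑ j ∈ Finset.Icc 1 b, H (j+a) * cc b j ≤ 0 := by rw [← hgg]; exact key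
  have hshow : ∑ j ∈ Finset.Icc 1 b,
      H (j + a) * ((b : ℝ) - 1 + κ (j - 1) + κ (b - j) - κ b)
      = ∑ j ∈ Finset.Icc 1 b, H (j+a) * cc b j := rfl
  rw [hshow]
  linarith
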